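/- Let C be a convex, max-closed and bounded subset of L0+, and let U : L0+ → [-∞, ∞) be concave, upper semi-continuous (with respect to the topology of convergence in probability) and monotone, i.e. U(f) ≤ U(g) whenever f ≤ g almost surely. Then there exists g in C^max (the set of maximal elements of C) such that sup_{f ∈ C} U(f) = U(g) < ∞. -/

import Mathlib

open MeasureTheory Filter Set

noncomputable section

variable {Ω : Type*} [MeasurableSpace Ω]

/-- The nonnegative orthant `L⁰₊` of the space `L⁰` of (a.e.-equivalence classes of)
random variables over `(Ω, ℱ, P)`. -/
def L0plus (P : Measure Ω) : Set (Ω →ₘ[P] ℝ) := {f | 0 ≤ f}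

/-- The metric `(f, g) ↦ E[1 ∧ |f - g|]` inducing the topology of convergence
in probability on `L⁰`. -/
def dist0 (P : Measure Ω) (f g : Ω →ₘ[P] ℝ) : ℝ :=
  ∫ ω, min 1 |f ω - g ω| ∂P

/-- Convergence in probability of a sequence in `L⁰`. -/
def Tendsto0 (P : Measure Ω) (f : ℕ → Ω →ₘ[P] ℝ) (g : Ω →ₘ[P] ℝ) : Prop :=
  Tendsto (fun n => dist0 P (f n) g) atTop (nhds 0)

/-- Closure of a set in `L⁰` with respect to the topology of convergence in probability. -/
def closure0 (P : Measure Ω) (C : Set (Ω →ₘ[P] ℝ)) : Set (Ω →ₘ[P] ℝ) :=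
  {f | ∀ ε : ℝ, 0 < ε → ∃ g ∈ C, dist0 P f g < ε}

/-- A set of `L⁰` is closed iff it contains its closure. -/
def IsClosed0 (P : Measure Ω) (C : Set (Ω →ₘ[P] ℝ)) : Prop :=
  closure0 P C ⊆ C

/-- Boundedness (in probability) of a set `C ⊆ L⁰₊` : `lim_{ℓ → ∞} sup_{f ∈ C} P[f > ℓ] = 0`. -/
def Bounded0 (P : Measure Ω) (C : Set (Ω →ₘ[P] ℝ)) : Prop :=
  Tendsto (fun ℓ : ℝ => ⨆ f ∈ C, P {ω | ℓ < f ω}) atTop (nhds 0)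

/-- The set `C^max` of maximal elements of `C ⊆ L⁰₊` : `f ∈ C` such that `f ≤ g` a.s.
and `g ∈ C` imply `f = g` a.s. -/
def maxSet (P : Measure Ω) (C : Set (Ω →ₘ[P] ℝ)) : Set (Ω →ₘ[P] ℝ) :=
  {f | f ∈ C ∧ ∀ g ∈ C, f ≤ g → f = g}

/-- `C` is max-closed if every maximal element of its closure already belongs to `C`. -/
def MaxClosed (P : Measure Ω) (C : Set (Ω →ₘ[P] ℝ)) : Prop :=
  maxSet P (closure0 P C) ⊆ C

/-- The pairing `⟨μ, f⟩ = ∫ f dμ ∈ [0, ∞]` between a nonnegative measure `μ` and `f ∈ L⁰₊`. -/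
def pairing {P : Measure Ω} (μ : Measure Ω) (f : Ω →ₘ[P] ℝ) : ENNReal :=
  ∫⁻ ω, ENNReal.ofReal (f ω) ∂μ

/-- The set `C^osp` of outer support points of `C ⊆ L⁰₊`: points `g ∈ C^max` for which there
is a σ-finite nonnegative measure `μ ≪ P` with `0 < sup_{f ∈ C} ⟨μ, f⟩ = ⟨μ, g⟩ < ∞`;
by convention `{0}^osp = {0}`. -/
def osp (P : Measure Ω) (C : Set (Ω →ₘ[P] ℝ)) : Set (Ω →ₘ[P] ℝ) :=
  {g | g ∈ maxSet P C ∧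
    (C = {0} ∨ ∃ μ : Measure Ω, μ ≪ P ∧ SigmaFinite μ ∧
      0 < pairing μ g ∧ pairing μ g < ⊤ ∧ (⨆ f ∈ C, pairing μ f) = pairing μ g)}

/-- The solid hull of `C ⊆ L⁰₊`. -/
def solidHull (P : Measure Ω) (C : Set (Ω →ₘ[P] ℝ)) : Set (Ω →ₘ[P] ℝ) :=
  {f | f ∈ L0plus P ∧ ∃ g ∈ C, f ≤ g}

/-- A set `S ⊆ L⁰₊` is solid if `g ∈ S` and `0 ≤ f ≤ g` imply `f ∈ S`. -/
def Solid (P : Measure Ω) (S : Set (Ω →ₘ[P] ℝ)) : Prop :=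
  ∀ g ∈ S, ∀ f : Ω →ₘ[P] ℝ, 0 ≤ f → f ≤ g → f ∈ S

/-- `(g n)` is a sequence of forward convex combinations of `(f n)`. -/
def ForwardConvexComb (P : Measure Ω) (f g : ℕ → Ω →ₘ[P] ℝ) : Prop :=
  ∀ n : ℕ, g n ∈ convexHull ℝ (f '' Set.Ici n)

end


noncomputable section Aux
open MeasureTheory Filter Set
set_option linter.unusedSectionVars false
variable {Ω : Type*} [MeasurableSpace Ω] {P : Measure Ω} [IsProbabilityMeasure P]

namespace S0

/-- integrand of dist0 -/
lemma dfun_meas (f g : Ω →ₘ[P] ℝ) : Measurable (fun ω => min 1 |f ω - g ω|) :=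
  (measurable_const.min ((f.stronglyMeasurable.measurable.sub
    g.stronglyMeasurable.measurable).abs))

lemma dfun_nonneg (f g : Ω →ₘ[P] ℝ) (ω : Ω) : 0 ≤ min 1 |f ω - g ω| :=
  le_min one_pos.le (abs_nonneg _)

lemma dfun_le_one (f g : Ω →ₘ[P] ℝ) (ω : Ω) : min 1 |f ω - g ω| ≤ 1 := min_le_left _ _

lemma integrable_of_bdd01 {h : Ω → ℝ} (hm : AEStronglyMeasurable h P)
    (h0 : ∀ᵐ ω ∂P, 0 ≤ h ω) (h1 : ∀ᵐ ω ∂P, h ω ≤ 1) : Integrable h P := by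
  refine Integrable.mono' (integrable_const 1) hm ?_
  filter_upwards [h0, h1] with ω a b
  rwa [Real.norm_eq_abs, abs_of_nonneg a]

lemma dfun_integrable (f g : Ω →ₘ[P] ℝ) : Integrable (fun ω => min 1 |f ω - g ω|) P :=
  integrable_of_bdd01 (dfun_meas f g).aestronglyMeasurable
    (Eventually.of_forall (dfun_nonneg f g)) (Eventually.of_forall (dfun_le_one f g))

lemma dist0_nonneg (f g : Ω →ₘ[P] ℝ) : 0 ≤ dist0 P f g :=
  integral_nonneg (dfun_nonneg f g)

lemma dist0_le_one (f g : Ω →ₘ[P] ℝ) : dist0 P f g ≤ 1 := by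
  have := integral_mono (dfun_integrable f g) (integrable_const 1) (dfun_le_one f g)
  simpa [dist0] using this

lemma dist0_self (f : Ω →ₘ[P] ℝ) : dist0 P f f = 0 := by
  unfold dist0; simp

lemma dist0_comm (f g : Ω →ₘ[P] ℝ) : dist0 P f g = dist0 P g f := by
  unfold dist0
  congr 1; funext ω; rw [abs_sub_comm]

lemma min1_tri {x y z : ℝ} (h1 : |x - z| ≤ |x - y| + |y - z|) :
    min 1 |x - z| ≤ min 1 |x - y| + min 1 |y - z| := by
  rcases le_total 1 |x - y| with hb | hb
  · have : min 1 |x - y| = 1 := min_eq_left hb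
    rw [this]
    have := min_le_left 1 |x - z|
    nlinarith [le_min one_pos.le (abs_nonneg (y - z)), abs_nonneg (y-z)]
  · rcases le_total 1 |y - z| with hc | hc
    · have : min 1 |y - z| = 1 := min_eq_left hc
      rw [this]
      have := min_le_left 1 |x - z|
      nlinarith [le_min one_pos.le (abs_nonneg (x - y)), abs_nonneg (x-y)]
    · rw [min_eq_right hb, min_eq_right hc]
      exact le_trans (min_le_right _ _) h1

lemma dist0_triangle (f g h : Ω →ₘ[P] ℝ) : dist0 P f h ≤ dist0 P f g + dist0 P g h := by
  unfold dist0
  rw [← integral_add (dfun_integrable f g) (dfun_integrable g h)]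
  refine integral_mono (dfun_integrable f h)
    ((dfun_integrable f g).add (dfun_integrable g h)) (fun ω => ?_)
  exact min1_tri (abs_sub_le _ _ _)

lemma markov (f g : Ω →ₘ[P] ℝ) {ε : ℝ} (hε : 0 < ε) :
    ENNReal.ofReal (min 1 ε) * P {ω | ε < |f ω - g ω|} ≤ ENNReal.ofReal (dist0 P f g) := by
  have key : ENNReal.ofReal (dist0 P f g)
      = ∫⁻ ω, ENNReal.ofReal (min 1 |f ω - g ω|) ∂P :=
    MeasureTheory.ofReal_integral_eq_lintegral_ofReal (dfun_integrable f g)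
      (Eventually.of_forall (dfun_nonneg f g))
  rw [key]
  have hsub : {ω | ε < |f ω - g ω|} ⊆
      {ω | ENNReal.ofReal (min 1 ε) ≤ ENNReal.ofReal (min 1 |f ω - g ω|)} := by
    intro ω hω
    exact ENNReal.ofReal_le_ofReal (min_le_min le_rfl (le_of_lt hω))
  calc ENNReal.ofReal (min 1 ε) * P {ω | ε < |f ω - g ω|}
      ≤ ENNReal.ofReal (min 1 ε) *
        P {ω | ENNReal.ofReal (min 1 ε) ≤ ENNReal.ofReal (min 1 |f ω - g ω|)} := by
        exact mul_le_mul_right (measure_mono hsub) _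
    _ ≤ _ := mul_meas_ge_le_lintegral₀
        ((ENNReal.measurable_ofReal.comp (dfun_meas f g)).aemeasurable) _

lemma markov' (f g : Ω →ₘ[P] ℝ) {ε δ : ℝ} (hε : 0 < ε) (h : dist0 P f g < δ) :
    P {ω | ε < |f ω - g ω|} ≤ ENNReal.ofReal (δ / min 1 ε) := by
  have h1 : (0:ℝ) < min 1 ε := lt_min one_pos hε
  have := markov f g hε
  have h2 : ENNReal.ofReal (min 1 ε) * P {ω | ε < |f ω - g ω|} ≤ ENNReal.ofReal δ :=
    this.trans (ENNReal.ofReal_le_ofReal h.le)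
  rw [ENNReal.ofReal_div_of_pos h1]
  rw [ENNReal.le_div_iff_mul_le (Or.inl (by simp [ENNReal.ofReal_pos.2 h1, ne_of_gt, hε]))
    (Or.inl ENNReal.ofReal_ne_top)]
  rwa [mul_comm]

lemma dist0_le (f g : Ω →ₘ[P] ℝ) {ε : ℝ} (hε : 0 ≤ ε) :
    dist0 P f g ≤ ε + (P {ω | ε < |f ω - g ω|}).toReal := by
  have hS : MeasurableSet {ω | ε < |f ω - g ω|} :=
    measurableSet_lt measurable_const
      ((f.stronglyMeasurable.measurable.sub g.stronglyMeasurable.measurable).abs)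
  have hind : Integrable ({ω | ε < |f ω - g ω|}.indicator (fun _ => (1:ℝ))) P :=
    (integrable_const (1:ℝ)).indicator hS
  have hptw : ∀ ω, min 1 |f ω - g ω| ≤ ε + {ω | ε < |f ω - g ω|}.indicator (fun _ => (1:ℝ)) ω := by
    intro ω
    by_cases hω : ε < |f ω - g ω|
    · simp only [Set.indicator_apply, Set.mem_setOf_eq, if_pos hω]
      exact le_trans (min_le_left _ _) (by linarith)
    · simp only [Set.indicator_apply, Set.mem_setOf_eq, if_neg hω]
      push_neg at hω
      simpa using le_trans (min_le_right _ _) hω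
  have step : dist0 P f g ≤ ∫ ω, (ε + {ω | ε < |f ω - g ω|}.indicator (fun _ => (1:ℝ)) ω) ∂P :=
    integral_mono (dfun_integrable f g) ((integrable_const ε).add hind) hptw
  have step2 : ∫ ω, (ε + {ω | ε < |f ω - g ω|}.indicator (fun _ => (1:ℝ)) ω) ∂P
      = ε + (P {ω | ε < |f ω - g ω|}).toReal := by
    rw [integral_add (integrable_const ε) hind, integral_const,
      integral_indicator_const (1:ℝ) hS]
    simp
    rfl
  rw [step2] at step; exact step

lemma subset_closure0 (C : Set (Ω →ₘ[P] ℝ)) : C ⊆ closure0 P C := by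
  intro f hf ε hε
  exact ⟨f, hf, by rw [dist0_self]; exact hε⟩

lemma closure0_idem (C : Set (Ω →ₘ[P] ℝ)) : closure0 P (closure0 P C) ⊆ closure0 P C := by
  intro f hf ε hε
  obtain ⟨g, hg, hd⟩ := hf (ε/2) (by linarith)
  obtain ⟨k, hk, hd2⟩ := hg (ε/2) (by linarith)
  exact ⟨k, hk, lt_of_le_of_lt (dist0_triangle f g k) (by linarith)⟩

lemma mem_closure0_of_tendsto {C : Set (Ω →ₘ[P] ℝ)} {f : ℕ → Ω →ₘ[P] ℝ}
    {g : Ω →ₘ[P] ℝ} (hf : ∀ n, f n ∈ C) (ht : Tendsto0 P f g) : g ∈ closure0 P C := by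
  intro ε hε
  have := (ht.eventually (eventually_lt_nhds hε)).exists
  obtain ⟨n, hn⟩ := this
  exact ⟨f n, hf n, by rwa [dist0_comm]⟩

lemma closure0_subset_L0plus {C : Set (Ω →ₘ[P] ℝ)} (hC : C ⊆ L0plus P) :
    closure0 P C ⊆ L0plus P := by
  intro f hf
  have key : ∀ ε : ℝ, 0 < ε → P {ω | f ω < -ε} = 0 := by
    intro ε hε
    have h1 : (0:ℝ) < min 1 ε := lt_min one_pos hε
    have : ∀ δ : ℝ, 0 < δ → P {ω | f ω < -ε} ≤ ENNReal.ofReal (δ / min 1 ε) := by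
      intro δ hδ
      obtain ⟨g, hg, hd⟩ := hf δ hδ
      have hg0 : (0:Ω →ₘ[P] ℝ) ≤ g := hC hg
      have hg0' : ∀ᵐ ω ∂P, 0 ≤ g ω := by
        have := MeasureTheory.AEEqFun.coeFn_le.2 hg0
        filter_upwards [this, MeasureTheory.AEEqFun.coeFn_zero (β := ℝ) (μ := P)] with ω h1 h2
        rw [h2] at h1; exact h1
      have hsub : ∀ᵐ ω ∂P, ω ∈ {ω | f ω < -ε} → ω ∈ {ω | ε < |f ω - g ω|} := by
        filter_upwards [hg0'] with ω h0 hm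
        have hm' : f ω < -ε := hm
        show ε < |f ω - g ω|
        rw [abs_sub_comm, abs_of_pos (by linarith)]
        linarith
      calc P {ω | f ω < -ε} ≤ P {ω | ε < |f ω - g ω|} :=
            measure_mono_ae hsub
        _ ≤ _ := markov' f g hε hd
    have h0 : P {ω | f ω < -ε} ≤ 0 := by
      refine ENNReal.le_of_forall_pos_le_add fun η hη _ => ?_
      have hδ : (0:ℝ) < min 1 ε * η := by positivity
      have := this (min 1 ε * η) hδ
      rw [mul_comm, mul_div_assoc, div_self (ne_of_gt h1), mul_one] at this
      calc P {ω | f ω < -ε} ≤ ENNReal.ofReal η := this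
        _ = (η : ENNReal) := ENNReal.ofReal_coe_nnreal
        _ ≤ 0 + η := by simp
    simpa using h0
  have : P {ω | f ω < 0} = 0 := by
    have hsub : {ω | f ω < 0} ⊆ ⋃ n : ℕ, {ω | f ω < -(1/(n+1))} := by
      intro ω hω
      simp only [Set.mem_setOf_eq] at hω
      obtain ⟨n, hn⟩ := exists_nat_one_div_lt (show (0:ℝ) < -(f ω) by linarith)
      exact Set.mem_iUnion.2 ⟨n, by simp only [Set.mem_setOf_eq]; linarith⟩
    refine le_antisymm (le_trans (measure_mono hsub) ?_) zero_le
    calc P (⋃ n : ℕ, {ω | f ω < -(1/(n+1))}) ≤ ∑' n : ℕ, P {ω | f ω < -(1/(n+1))} :=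
        measure_iUnion_le _
      _ = 0 := by
          have hk : ∀ n : ℕ, P {ω | f ω < -(1/(n+1))} = 0 := by
            intro n
            exact key _ (by positivity)
          simp only [ENNReal.tsum_eq_zero]
          intro n
          simpa using hk n
  show (0:Ω →ₘ[P] ℝ) ≤ f
  rw [← MeasureTheory.AEEqFun.coeFn_le]
  have : ∀ᵐ ω ∂P, ¬ (f ω < 0) := by
    rw [MeasureTheory.ae_iff]; simpa using this
  filter_upwards [this, MeasureTheory.AEEqFun.coeFn_zero (β := ℝ) (μ := P)] with ω h1 h2
  rw [h2]; push_neg at h1; exact h1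

lemma bounded_closure0 {C : Set (Ω →ₘ[P] ℝ)} (hbdd : Bounded0 P C) :
    ∀ δ : ENNReal, 0 < δ → ∃ M : ℝ, ∀ f ∈ closure0 P C, P {ω | M < f ω} ≤ δ := by
  intro δ hδ
  rcases eq_top_or_lt_top δ with rfl | hδtop
  · exact ⟨0, fun f _ => le_top⟩
  have h2 : (0:ENNReal) < δ/2 := ENNReal.half_pos (ne_of_gt hδ)
  obtain ⟨ℓ, hℓ⟩ := (ENNReal.tendsto_nhds_zero.mp hbdd (δ/2) h2).exists
  refine ⟨max ℓ 0 + 1, fun f hf => ?_⟩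
  have key : ∀ η : NNReal, 0 < η → P {ω | max ℓ 0 + 1 < f ω} ≤ δ/2 + η := by
    intro η hη
    obtain ⟨g, hg, hd⟩ := hf (min 1 (1/2) * η) (by positivity)
    have hsub : {ω | max ℓ 0 + 1 < f ω} ⊆ {ω | ℓ < g ω} ∪ {ω | (1/2:ℝ) < |f ω - g ω|} := by
      intro ω hω
      simp only [Set.mem_setOf_eq] at hω
      by_cases hgω : ℓ < g ω
      · exact Or.inl hgω
      · push_neg at hgω
        refine Or.inr ?_
        have h1 : f ω - g ω > 1 := by
          have := le_max_left ℓ (0:ℝ)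
          linarith
        show (1/2:ℝ) < |f ω - g ω|
        rw [abs_of_pos (by linarith)]
        linarith
    have hm : P {ω | (1/2:ℝ) < |f ω - g ω|} ≤ η := by
      have := markov' f (g := g) (ε := 1/2) (δ := min 1 (1/2) * η) (by norm_num) hd
      rw [mul_comm, mul_div_assoc, div_self (by norm_num : (min 1 (1/2):ℝ) ≠ 0), mul_one] at this
      simpa [ENNReal.ofReal_coe_nnreal] using this
    calc P {ω | max ℓ 0 + 1 < f ω}
        ≤ P ({ω | ℓ < g ω} ∪ {ω | (1/2:ℝ) < |f ω - g ω|}) := measure_mono hsub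
      _ ≤ P {ω | ℓ < g ω} + P {ω | (1/2:ℝ) < |f ω - g ω|} := measure_union_le _ _
      _ ≤ δ/2 + η := add_le_add (le_trans (le_biSup (fun f : Ω →ₘ[P] ℝ => P {ω | ℓ < f ω}) hg) hℓ) hm
  have hfin : P {ω | max ℓ 0 + 1 < f ω} ≤ δ/2 :=
    ENNReal.le_of_forall_pos_le_add fun η hη _ => key η hη
  exact hfin.trans ENNReal.half_le_self

lemma complete0 (g : ℕ → Ω →ₘ[P] ℝ)
    (hc : ∀ ε : ℝ, 0 < ε → ∃ N, ∀ m n, N ≤ m → N ≤ n → dist0 P (g m) (g n) < ε) :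
    ∃ h : Ω →ₘ[P] ℝ, Tendsto0 P g h := by
  have hgeom : ∀ k : ℕ, (0:ℝ) < (1/2)^(k+1) := fun k => by positivity
  choose N hN using fun k => hc ((1/2)^(k+1)) (hgeom k)
  set φ : ℕ → ℕ := fun k => Nat.rec (N 0) (fun k ih => max (ih+1) (N (k+1))) k with hφdef
  have hφsucc : ∀ k, φ (k+1) = max (φ k + 1) (N (k+1)) := fun k => rfl
  have hφmono : ∀ k, φ k < φ (k+1) := fun k => by
    rw [hφsucc]; exact lt_of_lt_of_le (Nat.lt_succ_self _) (le_max_left _ _)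
  have hφN : ∀ k, N k ≤ φ k := by
    intro k
    cases k with
    | zero => exact le_rfl
    | succ k => rw [hφsucc]; exact le_max_right _ _
  have hφstrict : StrictMono φ := strictMono_nat_of_lt_succ hφmono
  have hdistk : ∀ k, dist0 P (g (φ (k+1))) (g (φ k)) < (1/2)^(k+1) := by
    intro k
    exact hN k _ _ ((hφN k).trans (le_of_lt (hφmono k))) (hφN k)
  set d : ℕ → Ω → ℝ := fun k ω => min 1 |(g (φ (k+1))) ω - (g (φ k)) ω| with hd_def
  have hd_meas : ∀ k, Measurable (d k) := fun k => dfun_meas _ _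
  have hd_nonneg : ∀ k ω, 0 ≤ d k ω := fun k ω => dfun_nonneg _ _ ω
  have hd_int : ∀ k, ∫ ω, d k ω ∂P = dist0 P (g (φ (k+1))) (g (φ k)) := fun k => rfl
  set F : Ω → ENNReal := fun ω => ∑' k, ENNReal.ofReal (d k ω) with hF_def
  have hF_meas : Measurable F :=
    Measurable.ennreal_tsum fun k => ENNReal.measurable_ofReal.comp (hd_meas k)
  have hF_lint : ∫⁻ ω, F ω ∂P < ⊤ := by
    have h1 : ∫⁻ ω, F ω ∂P = ∑' k, ∫⁻ ω, ENNReal.ofReal (d k ω) ∂P :=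
      lintegral_tsum fun k => (ENNReal.measurable_ofReal.comp (hd_meas k)).aemeasurable
    have h2 : ∀ k, ∫⁻ ω, ENNReal.ofReal (d k ω) ∂P ≤ ENNReal.ofReal ((1/2)^(k+1)) := by
      intro k
      rw [← MeasureTheory.ofReal_integral_eq_lintegral_ofReal (dfun_integrable _ _)
        (Eventually.of_forall (hd_nonneg k))]
      exact ENNReal.ofReal_le_ofReal (hdistk k).le
    have h3 : ∑' k, ENNReal.ofReal ((1/2:ℝ)^(k+1)) < ⊤ := by
      rw [← ENNReal.ofReal_tsum_of_nonneg (fun k => (hgeom k).le)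
        ((summable_nat_add_iff 1).2 summable_geometric_two)]
      exact ENNReal.ofReal_lt_top
    calc ∫⁻ ω, F ω ∂P = ∑' k, ∫⁻ ω, ENNReal.ofReal (d k ω) ∂P := h1
      _ ≤ ∑' k, ENNReal.ofReal ((1/2:ℝ)^(k+1)) := ENNReal.tsum_le_tsum h2
      _ < ⊤ := h3
  have hFae : ∀ᵐ ω ∂P, F ω < ⊤ := ae_lt_top hF_meas hF_lint.ne
  -- a.e. Cauchy
  have hCauchy : ∀ᵐ ω ∂P, CauchySeq (fun k => (g (φ k)) ω) := by
    filter_upwards [hFae] with ω hω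
    have hsum : Summable (fun k => d k ω) := by
      have := ENNReal.summable_toReal hω.ne
      refine this.congr fun k => ?_
      exact ENNReal.toReal_ofReal (hd_nonneg k ω)
    have htend := hsum.tendsto_atTop_zero
    obtain ⟨K, hK⟩ := (htend.eventually (eventually_lt_nhds one_pos)).exists_forall_of_atTop
    have habs : Summable (fun k => |(g (φ (k+1))) ω - (g (φ k)) ω|) := by
      rw [← summable_nat_add_iff K]
      refine ((summable_nat_add_iff K).2 hsum).congr fun k => ?_
      have h1 : d (k + K) ω < 1 := hK (k+K) (le_add_self)
      have h2 : |(g (φ (k+K+1))) ω - (g (φ (k+K))) ω| ≤ 1 := by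
        by_contra hcon
        push_neg at hcon
        have : d (k+K) ω = 1 := min_eq_left hcon.le
        linarith
      show d (k+K) ω = _
      rw [hd_def]
      exact (min_eq_right h2)
    refine cauchySeq_of_summable_dist ?_
    refine habs.congr fun k => ?_
    rw [Real.dist_eq, abs_sub_comm]
  set h0 : Ω → ℝ := fun ω => limUnder atTop (fun k => (g (φ k)) ω) with hh0_def
  have htend0 : ∀ᵐ ω ∂P, Tendsto (fun k => (g (φ k)) ω) atTop (nhds (h0 ω)) := by
    filter_upwards [hCauchy] with ω hω
    exact hω.tendsto_limUnder
  have hameas : AEMeasurable h0 P :=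
    aemeasurable_of_tendsto_metrizable_ae atTop
      (fun k => (g (φ k)).stronglyMeasurable.measurable.aemeasurable) htend0
  set h1 : Ω → ℝ := hameas.mk h0 with hh1_def
  have hh1_meas : Measurable h1 := hameas.measurable_mk
  have hh01 : h0 =ᵐ[P] h1 := hameas.ae_eq_mk
  have htend1 : ∀ᵐ ω ∂P, Tendsto (fun k => (g (φ k)) ω) atTop (nhds (h1 ω)) := by
    filter_upwards [htend0, hh01] with ω ht he
    rwa [he] at ht
  set h : Ω →ₘ[P] ℝ := MeasureTheory.AEEqFun.mk h1 hh1_meas.aestronglyMeasurable with hh_def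
  have hcoeh : (h : Ω → ℝ) =ᵐ[P] h1 := MeasureTheory.AEEqFun.coeFn_mk _ _
  -- dist0 (g (φ k)) h → 0
  have hdist_eq : ∀ k, dist0 P (g (φ k)) h = ∫ ω, min 1 |(g (φ k)) ω - h1 ω| ∂P := by
    intro k
    refine integral_congr_ae ?_
    filter_upwards [hcoeh] with ω hω
    rw [hω]
  have htphi : Tendsto (fun k => dist0 P (g (φ k)) h) atTop (nhds 0) := by
    simp only [hdist_eq]
    have := MeasureTheory.tendsto_integral_of_dominated_convergence
      (F := fun k ω => min 1 |(g (φ k)) ω - h1 ω|) (f := fun _ => (0:ℝ)) (bound := fun _ => (1:ℝ))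
      (fun k => (measurable_const.min (((g (φ k)).stronglyMeasurable.measurable.sub
        hh1_meas).abs)).aestronglyMeasurable)
      (integrable_const 1)
      (fun k => Eventually.of_forall fun ω => by
        rw [Real.norm_eq_abs, abs_of_nonneg (le_min one_pos.le (abs_nonneg _))]
        exact min_le_left _ _)
      (by
        filter_upwards [htend1] with ω hω
        have hcont : Continuous (fun x : ℝ => min 1 |x - h1 ω|) :=
          continuous_const.min ((continuous_id.sub continuous_const).abs)
        have := (hcont.tendsto (h1 ω)).comp hω
        simpa [Function.comp_def] using this)
    simpa using this
  -- full sequence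
  refine ⟨h, ?_⟩
  refine NormedAddCommGroup.tendsto_nhds_zero.mpr fun ε hε => ?_
  obtain ⟨Nε, hNε⟩ := hc (ε/2) (by linarith)
  obtain ⟨k, hk1, hk2⟩ : ∃ k, Nε ≤ φ k ∧ dist0 P (g (φ k)) h < ε/2 := by
    have h1 := (htphi.eventually (eventually_lt_nhds (show (0:ℝ) < ε/2 by linarith)))
    have h2 : ∀ᶠ k in atTop, Nε ≤ φ k :=
      eventually_atTop.2 ⟨Nε, fun k hk => le_trans hk (hφstrict.le_apply)⟩
    exact (h2.and h1).exists
  refine eventually_atTop.2 ⟨Nε, fun n hn => ?_⟩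
  have : dist0 P (g n) h ≤ dist0 P (g n) (g (φ k)) + dist0 P (g (φ k)) h := dist0_triangle _ _ _
  have h3 : dist0 P (g n) (g (φ k)) < ε/2 := hNε n (φ k) hn hk1
  rw [Real.norm_eq_abs, abs_of_nonneg (dist0_nonneg _ _)]
  linarith

lemma L0plus_ae {f : Ω →ₘ[P] ℝ} (hf : f ∈ L0plus P) : ∀ᵐ ω ∂P, 0 ≤ f ω := by
  have := MeasureTheory.AEEqFun.coeFn_le.2 (hf : (0:Ω →ₘ[P] ℝ) ≤ f)
  filter_upwards [this, MeasureTheory.AEEqFun.coeFn_zero (β := ℝ) (μ := P)] with ω h1 h2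
  rw [h2] at h1; exact h1

lemma ae_le_of_meas {f g : Ω →ₘ[P] ℝ} (h : ∀ ε : ℝ, 0 < ε → P {ω | ε < f ω - g ω} = 0) :
    f ≤ g := by
  have hz : P {ω | 0 < f ω - g ω} = 0 := by
    have hsub : {ω | 0 < f ω - g ω} ⊆ ⋃ n : ℕ, {ω | (1/(n+1) : ℝ) < f ω - g ω} := by
      intro ω hω
      have hω' : 0 < f ω - g ω := hω
      obtain ⟨n, hn⟩ := exists_nat_one_div_lt hω'
      exact Set.mem_iUnion.2 ⟨n, hn⟩
    refine le_antisymm (le_trans (measure_mono hsub) ?_) zero_le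
    calc P (⋃ n : ℕ, {ω | (1/(n+1):ℝ) < f ω - g ω})
        ≤ ∑' n : ℕ, P {ω | (1/(n+1):ℝ) < f ω - g ω} := measure_iUnion_le _
      _ = 0 := by
          simp only [ENNReal.tsum_eq_zero]
          intro n
          exact h _ (by positivity)
  rw [← MeasureTheory.AEEqFun.coeFn_le]
  have : ∀ᵐ ω ∂P, ¬ (0 < f ω - g ω) := by
    rw [MeasureTheory.ae_iff]; simpa using hz
  filter_upwards [this] with ω h1
  push_neg at h1
  linarith

/-- The strictly concave "Komlós functional" `ψ(f) = E[1 - e^{-f}]`. -/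
def psi (P : Measure Ω) [IsProbabilityMeasure P] (f : Ω →ₘ[P] ℝ) : ℝ :=
  ∫ ω, (1 - Real.exp (-f ω)) ∂P

lemma psi_meas (f : Ω →ₘ[P] ℝ) : Measurable (fun ω => 1 - Real.exp (-f ω)) :=
  measurable_const.sub (Real.measurable_exp.comp f.stronglyMeasurable.measurable.neg)

lemma psi_bdd_ae {f : Ω →ₘ[P] ℝ} (hf : f ∈ L0plus P) :
    (∀ᵐ ω ∂P, 0 ≤ 1 - Real.exp (-f ω)) ∧ (∀ᵐ ω ∂P, 1 - Real.exp (-f ω) ≤ 1) := by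
  constructor
  · filter_upwards [L0plus_ae hf] with ω h0
    have : Real.exp (-f ω) ≤ 1 := Real.exp_le_one_iff.2 (by linarith)
    linarith
  · exact Eventually.of_forall fun ω => by
      have := Real.exp_pos (-f ω); linarith

lemma psi_integrable {f : Ω →ₘ[P] ℝ} (hf : f ∈ L0plus P) :
    Integrable (fun ω => 1 - Real.exp (-f ω)) P :=
  integrable_of_bdd01 (psi_meas f).aestronglyMeasurable (psi_bdd_ae hf).1 (psi_bdd_ae hf).2

lemma psi_nonneg {f : Ω →ₘ[P] ℝ} (hf : f ∈ L0plus P) : 0 ≤ psi P f :=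
  integral_nonneg_of_ae (psi_bdd_ae hf).1

lemma psi_le_one {f : Ω →ₘ[P] ℝ} (hf : f ∈ L0plus P) : psi P f ≤ 1 := by
  have := integral_mono_ae (psi_integrable hf) (integrable_const 1) (psi_bdd_ae hf).2
  simpa [psi] using this

lemma L0plus_of_le {f g : Ω →ₘ[P] ℝ} (hf : f ∈ L0plus P) (hle : f ≤ g) : g ∈ L0plus P :=
  le_trans (hf : (0:Ω →ₘ[P] ℝ) ≤ f) hle

lemma psi_mono {f g : Ω →ₘ[P] ℝ} (hf : f ∈ L0plus P) (hle : f ≤ g) : psi P f ≤ psi P g := by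
  refine integral_mono_ae (psi_integrable hf) (psi_integrable (L0plus_of_le hf hle)) ?_
  filter_upwards [MeasureTheory.AEEqFun.coeFn_le.2 hle] with ω h1
  have : Real.exp (-g ω) ≤ Real.exp (-f ω) := Real.exp_le_exp.2 (by linarith)
  linarith

lemma psi_strict {f g : Ω →ₘ[P] ℝ} (hf : f ∈ L0plus P) (hle : f ≤ g)
    (hpsi : psi P g ≤ psi P f) : f = g := by
  have hint : Integrable (fun ω => (1 - Real.exp (-g ω)) - (1 - Real.exp (-f ω))) P :=
    (psi_integrable (L0plus_of_le hf hle)).sub (psi_integrable hf)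
  have hnn : 0 ≤ᵐ[P] (fun ω => (1 - Real.exp (-g ω)) - (1 - Real.exp (-f ω))) := by
    filter_upwards [MeasureTheory.AEEqFun.coeFn_le.2 hle] with ω h1
    have : Real.exp (-g ω) ≤ Real.exp (-f ω) := Real.exp_le_exp.2 (by linarith)
    simp only [Pi.zero_apply]; linarith
  have hze : ∫ ω, ((1 - Real.exp (-g ω)) - (1 - Real.exp (-f ω))) ∂P = 0 := by
    rw [integral_sub (psi_integrable (L0plus_of_le hf hle)) (psi_integrable hf)]
    have h2 : psi P f ≤ psi P g := psi_mono hf hle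
    show psi P g - psi P f = 0
    linarith
  have := (integral_eq_zero_iff_of_nonneg_ae hnn hint).1 hze
  refine MeasureTheory.AEEqFun.ext ?_
  filter_upwards [this] with ω h1
  have h2 : Real.exp (-g ω) = Real.exp (-f ω) := by
    have : (1 - Real.exp (-g ω)) - (1 - Real.exp (-f ω)) = 0 := h1
    linarith
  have := Real.exp_injective h2
  linarith

/-- The quadratic gain functional. -/
def Qv (P : Measure Ω) [IsProbabilityMeasure P] (f g : Ω →ₘ[P] ℝ) : ℝ :=
  ∫ ω, (Real.exp (-f ω / 2) - Real.exp (-g ω / 2))^2 ∂P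

lemma Qv_meas (f g : Ω →ₘ[P] ℝ) :
    Measurable (fun ω => (Real.exp (-f ω / 2) - Real.exp (-g ω / 2))^2) := by
  apply Measurable.pow_const
  exact (Real.measurable_exp.comp ((f.stronglyMeasurable.measurable.neg).div_const 2)).sub
    (Real.measurable_exp.comp ((g.stronglyMeasurable.measurable.neg).div_const 2))

lemma Qv_bdd_ae {f g : Ω →ₘ[P] ℝ} (hf : f ∈ L0plus P) (hg : g ∈ L0plus P) :
    ∀ᵐ ω ∂P, (Real.exp (-f ω / 2) - Real.exp (-g ω / 2))^2 ≤ 1 := by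
  filter_upwards [L0plus_ae hf, L0plus_ae hg] with ω h1 h2
  have e1 : Real.exp (-f ω / 2) ≤ 1 := Real.exp_le_one_iff.2 (by linarith)
  have e2 : Real.exp (-g ω / 2) ≤ 1 := Real.exp_le_one_iff.2 (by linarith)
  have p1 := Real.exp_pos (-f ω / 2)
  have p2 := Real.exp_pos (-g ω / 2)
  nlinarith

lemma Qv_integrable {f g : Ω →ₘ[P] ℝ} (hf : f ∈ L0plus P) (hg : g ∈ L0plus P) :
    Integrable (fun ω => (Real.exp (-f ω / 2) - Real.exp (-g ω / 2))^2) P :=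
  integrable_of_bdd01 (Qv_meas f g).aestronglyMeasurable
    (Eventually.of_forall fun ω => sq_nonneg _) (Qv_bdd_ae hf hg)

lemma Qv_nonneg (f g : Ω →ₘ[P] ℝ) : 0 ≤ Qv P f g :=
  integral_nonneg fun ω => sq_nonneg _

lemma psi_midpoint {f g : Ω →ₘ[P] ℝ} (hf : f ∈ L0plus P) (hg : g ∈ L0plus P) :
    psi P ((1/2:ℝ) • f + (1/2:ℝ) • g) = (psi P f + psi P g)/2 + Qv P f g / 2 := by
  have hco : ⇑((1/2:ℝ) • f + (1/2:ℝ) • g) =ᵐ[P] fun ω => (1/2) * f ω + (1/2) * g ω := by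
    filter_upwards [MeasureTheory.AEEqFun.coeFn_add ((1/2:ℝ) • f) ((1/2:ℝ) • g),
      MeasureTheory.AEEqFun.coeFn_smul (1/2:ℝ) f,
      MeasureTheory.AEEqFun.coeFn_smul (1/2:ℝ) g] with ω h1 h2 h3
    rw [h1]
    show ((1/2:ℝ) • f) ω + ((1/2:ℝ) • g) ω = _
    rw [h2, h3]
    simp [smul_eq_mul]
  have step1 : psi P ((1/2:ℝ) • f + (1/2:ℝ) • g)
      = ∫ ω, (((1 - Real.exp (-f ω)) + (1 - Real.exp (-g ω)))/2
          + (Real.exp (-f ω / 2) - Real.exp (-g ω / 2))^2/2) ∂P := by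
    refine integral_congr_ae ?_
    filter_upwards [hco] with ω h1
    show 1 - Real.exp (-(((1/2:ℝ) • f + (1/2:ℝ) • g) ω)) = _
    rw [h1]
    have ea : Real.exp (-f ω) = Real.exp (-f ω / 2) * Real.exp (-f ω / 2) := by
      rw [← Real.exp_add]; ring_nf
    have eb : Real.exp (-g ω) = Real.exp (-g ω / 2) * Real.exp (-g ω / 2) := by
      rw [← Real.exp_add]; ring_nf
    have eab : Real.exp (-((1/2) * f ω + (1/2) * g ω))
        = Real.exp (-f ω / 2) * Real.exp (-g ω / 2) := by
      rw [← Real.exp_add]; ring_nf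
    rw [eab, ea, eb]; ring
  rw [step1]
  have i1 := psi_integrable hf
  have i2 := psi_integrable hg
  have i3 := Qv_integrable hf hg
  have hInt1 : Integrable (fun ω => (1 - Real.exp (-f ω) + (1 - Real.exp (-g ω))) / 2) P :=
    (i1.add i2).div_const 2
  have hInt3 : Integrable
      (fun ω => (Real.exp (-f ω / 2) - Real.exp (-g ω / 2))^2 / 2) P := i3.div_const 2
  rw [integral_add hInt1 hInt3, integral_div, integral_div, integral_add i1 i2]
  rfl

lemma exp_gap_aux {a b ε M : ℝ} (hε : 0 < ε) (haM : a ≤ M) (hab : ε < a - b) :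
    Real.exp (-M/2) * (1 - Real.exp (-ε/2)) ≤ Real.exp (-b/2) - Real.exp (-a/2) := by
  have h1 : Real.exp (-a/2) = Real.exp (-b/2) * Real.exp (-(a-b)/2) := by
    rw [← Real.exp_add]; ring_nf
  have heq : Real.exp (-b/2) - Real.exp (-a/2)
      = Real.exp (-b/2) * (1 - Real.exp (-(a-b)/2)) := by rw [h1]; ring
  rw [heq]
  have hbM : b ≤ M := by linarith
  refine mul_le_mul (Real.exp_le_exp.2 (by linarith)) ?_ ?_ (Real.exp_pos _).le
  · have : Real.exp (-(a-b)/2) ≤ Real.exp (-ε/2) := Real.exp_le_exp.2 (by linarith)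
    linarith
  · have : Real.exp (-ε/2) ≤ 1 := Real.exp_le_one_iff.2 (by linarith)
    linarith

lemma exp_gap {a b ε M : ℝ} (hε : 0 < ε) (haM : a ≤ M) (hbM : b ≤ M) (hab : ε < |a - b|) :
    (Real.exp (-M/2) * (1 - Real.exp (-ε/2)))^2
      ≤ (Real.exp (-a/2) - Real.exp (-b/2))^2 := by
  have hLnn : 0 ≤ Real.exp (-M/2) * (1 - Real.exp (-ε/2)) := by
    have : Real.exp (-ε/2) ≤ 1 := Real.exp_le_one_iff.2 (by linarith)
    have := (Real.exp_pos (-M/2)).le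
    nlinarith
  rcases lt_abs.1 hab with h | h
  · have := exp_gap_aux hε haM h
    have hsq : (Real.exp (-M/2) * (1 - Real.exp (-ε/2)))^2
        ≤ (Real.exp (-b/2) - Real.exp (-a/2))^2 := pow_le_pow_left₀ hLnn this 2
    calc (Real.exp (-M/2) * (1 - Real.exp (-ε/2)))^2
        ≤ (Real.exp (-b/2) - Real.exp (-a/2))^2 := hsq
      _ = (Real.exp (-a/2) - Real.exp (-b/2))^2 := by ring
  · have h' : ε < b - a := by linarith [neg_sub a b ▸ h]
    have := exp_gap_aux hε hbM h'
    exact pow_le_pow_left₀ hLnn this 2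

lemma Q_control {f g : Ω →ₘ[P] ℝ} (hf : f ∈ L0plus P) (hg : g ∈ L0plus P) {ε M : ℝ}
    (hε : 0 < ε) (hM : 0 ≤ M) :
    P {ω | ε < |f ω - g ω|} ≤ P {ω | M < f ω} + P {ω | M < g ω} +
      ENNReal.ofReal (Qv P f g)
        / ENNReal.ofReal ((Real.exp (-M/2) * (1 - Real.exp (-ε/2)))^2) := by
  set c : ℝ := (Real.exp (-M/2) * (1 - Real.exp (-ε/2)))^2 with hc_def
  have h1 : 0 < 1 - Real.exp (-ε/2) := by
    have : Real.exp (-ε/2) < 1 := Real.exp_lt_one_iff.2 (by linarith)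
    linarith
  have hc : 0 < c := by positivity
  set S : Set Ω := {ω | ε < |f ω - g ω|} \ ({ω | M < f ω} ∪ {ω | M < g ω}) with hS_def
  have hsplit : P {ω | ε < |f ω - g ω|}
      ≤ P {ω | M < f ω} + P {ω | M < g ω} + P S := by
    have : {ω | ε < |f ω - g ω|} ⊆ ({ω | M < f ω} ∪ {ω | M < g ω}) ∪ S := by
      intro ω hω
      by_cases hu : ω ∈ {ω | M < f ω} ∪ {ω | M < g ω}
      · exact Or.inl hu
      · exact Or.inr ⟨hω, hu⟩
    calc P {ω | ε < |f ω - g ω|} ≤ P (({ω | M < f ω} ∪ {ω | M < g ω}) ∪ S) := measure_mono this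
      _ ≤ P ({ω | M < f ω} ∪ {ω | M < g ω}) + P S := measure_union_le _ _
      _ ≤ P {ω | M < f ω} + P {ω | M < g ω} + P S :=
          add_le_add_left (measure_union_le _ _) _
  refine hsplit.trans (add_le_add_right ?_ _)
  -- P S ≤ ofReal Qv / ofReal c
  have hsub : S ≤ᵐ[P] {ω | ENNReal.ofReal c
      ≤ ENNReal.ofReal ((Real.exp (-f ω / 2) - Real.exp (-g ω / 2))^2)} := by
    filter_upwards [] with ω hω
    obtain ⟨h1', h2'⟩ := hω
    simp only [Set.mem_union, Set.mem_setOf_eq, not_or, not_lt] at h2'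
    have := exp_gap (a := f ω) (b := g ω) hε h2'.1 h2'.2 h1'
    exact ENNReal.ofReal_le_ofReal (by
      have ha : -f ω / 2 = -(f ω)/2 := by ring
      have hb : -g ω / 2 = -(g ω)/2 := by ring
      rw [ha, hb]; exact this)
  have hmark : ENNReal.ofReal c * P {ω | ENNReal.ofReal c
      ≤ ENNReal.ofReal ((Real.exp (-f ω / 2) - Real.exp (-g ω / 2))^2)}
      ≤ ENNReal.ofReal (Qv P f g) := by
    have := mul_meas_ge_le_lintegral₀
      (μ := P) ((Qv_meas f g).ennreal_ofReal.aemeasurable)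
      (ENNReal.ofReal c)
    refine le_trans this ?_
    rw [← MeasureTheory.ofReal_integral_eq_lintegral_ofReal (Qv_integrable hf hg)
      (Eventually.of_forall fun ω => sq_nonneg _)]
    exact le_refl _
  have : P S ≤ P {ω | ENNReal.ofReal c
      ≤ ENNReal.ofReal ((Real.exp (-f ω / 2) - Real.exp (-g ω / 2))^2)} := by
    refine measure_mono_ae ?_
    exact hsub
  refine this.trans ?_
  rw [ENNReal.le_div_iff_mul_le (Or.inl (by simp [ENNReal.ofReal_pos.2 hc, ne_of_gt]))
    (Or.inl ENNReal.ofReal_ne_top)]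
  rw [mul_comm]
  exact hmark

lemma Qv_le_psi_diff {f g : Ω →ₘ[P] ℝ} (hf : f ∈ L0plus P) (hle : f ≤ g) :
    Qv P f g ≤ psi P g - psi P f := by
  have hg := L0plus_of_le hf hle
  have key : Qv P f g ≤ ∫ ω, ((1 - Real.exp (-g ω)) - (1 - Real.exp (-f ω))) ∂P := by
    refine integral_mono_ae (Qv_integrable hf hg)
      ((psi_integrable hg).sub (psi_integrable hf)) ?_
    filter_upwards [MeasureTheory.AEEqFun.coeFn_le.2 hle] with ω hω
    have ea : Real.exp (-f ω) = Real.exp (-f ω / 2) * Real.exp (-f ω / 2) := by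
      rw [← Real.exp_add]; ring_nf
    have eb : Real.exp (-g ω) = Real.exp (-g ω / 2) * Real.exp (-g ω / 2) := by
      rw [← Real.exp_add]; ring_nf
    have hxy : Real.exp (-g ω / 2) ≤ Real.exp (-f ω / 2) := Real.exp_le_exp.2 (by linarith)
    have hy := Real.exp_pos (-g ω / 2)
    show (Real.exp (-f ω / 2) - Real.exp (-g ω / 2))^2 ≤ _
    rw [ea, eb]
    nlinarith
  rw [integral_sub (psi_integrable hg) (psi_integrable hf)] at key
  exact key

lemma le_of_tendsto0 {w : ℕ → Ω →ₘ[P] ℝ} {h x : Ω →ₘ[P] ℝ} (ht : Tendsto0 P w h)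
    (hx : ∀ m, x ≤ w m) : x ≤ h := by
  refine ae_le_of_meas fun ε hε => ?_
  have h1 : (0:ℝ) < min 1 ε := lt_min one_pos hε
  have key : ∀ η : NNReal, 0 < η → P {ω | ε < x ω - h ω} ≤ 0 + η := by
    intro η hη
    obtain ⟨m, hm⟩ := (ht.eventually (eventually_lt_nhds
      (show (0:ℝ) < min 1 ε * η by positivity))).exists
    have hmark := markov' (w m) h hε hm
    have hsub : {ω | ε < x ω - h ω} ≤ᵐ[P] {ω | ε < |(w m) ω - h ω|} := by
      filter_upwards [MeasureTheory.AEEqFun.coeFn_le.2 (hx m)] with ω hω hmem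
      have hmem' : ε < x ω - h ω := hmem
      show ε < |(w m) ω - h ω|
      have : ε < (w m) ω - h ω := by linarith
      exact lt_of_lt_of_le this (le_abs_self _)
    calc P {ω | ε < x ω - h ω} ≤ P {ω | ε < |(w m) ω - h ω|} := measure_mono_ae hsub
      _ ≤ ENNReal.ofReal ((min 1 ε * η) / min 1 ε) := hmark
      _ = ENNReal.ofReal η := by rw [mul_comm, mul_div_assoc, div_self (ne_of_gt h1), mul_one]
      _ ≤ 0 + η := by simp [ENNReal.ofReal_coe_nnreal]
  have := ENNReal.le_of_forall_pos_le_add fun η hη _ => key η hη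
  simpa using this

lemma exists_maximal {D : Set (Ω →ₘ[P] ℝ)} (hD0 : D ⊆ L0plus P)
    (hDcl : closure0 P D ⊆ D)
    (hDb : ∀ δ : ENNReal, 0 < δ → ∃ M : ℝ, 0 ≤ M ∧ ∀ f ∈ D, P {ω | M < f ω} ≤ δ)
    {g : Ω →ₘ[P] ℝ} (hg : g ∈ D) :
    ∃ h ∈ D, g ≤ h ∧ ∀ k ∈ D, h ≤ k → h = k := by
  classical
  set T : (Ω →ₘ[P] ℝ) → Set ℝ := fun x => psi P '' {k | k ∈ D ∧ x ≤ k} with hT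
  have hTne : ∀ x ∈ D, (T x).Nonempty := fun x hx => ⟨psi P x, ⟨x, ⟨hx, le_rfl⟩, rfl⟩⟩
  have hTbdd : ∀ x, BddAbove (T x) := fun x => ⟨1, fun y hy => by
    obtain ⟨k, hk, rfl⟩ := hy; exact psi_le_one (hD0 hk.1)⟩
  set S : (Ω →ₘ[P] ℝ) → ℝ := fun x => sSup (T x) with hS
  have hstep : ∀ x : {y // y ∈ D}, ∀ n : ℕ, ∃ k : {y // y ∈ D},
      x.1 ≤ k.1 ∧ S x.1 - (1/2)^n < psi P k.1 := by
    intro x n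
    have hlt : S x.1 - (1/2)^n < S x.1 := by
      have : (0:ℝ) < (1/2)^n := by positivity
      linarith
    obtain ⟨y, hy, hy2⟩ := exists_lt_of_lt_csSup (hTne x.1 x.2) hlt
    obtain ⟨k, hk, rfl⟩ := hy
    exact ⟨⟨k, hk.1⟩, hk.2, hy2⟩
  choose nxt hnxt1 hnxt2 using hstep
  set u : ℕ → {y // y ∈ D} := fun n => Nat.rec ⟨g, hg⟩ (fun n x => nxt x n) n with hu
  set v : ℕ → Ω →ₘ[P] ℝ := fun n => (u n).1 with hv
  have hvD : ∀ n, v n ∈ D := fun n => (u n).2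
  have hvle : ∀ n, v n ≤ v (n+1) := fun n => hnxt1 (u n) n
  have hvpsi : ∀ n, S (v n) - (1/2)^n < psi P (v (n+1)) := fun n => hnxt2 (u n) n
  have hvmono : Monotone v := monotone_nat_of_le_succ hvle
  have hψmono : Monotone (fun n => psi P (v n)) := fun n m hnm =>
    psi_mono (hD0 (hvD n)) (hvmono hnm)
  have hψbdd : BddAbove (Set.range (fun n => psi P (v n))) :=
    ⟨1, fun y hy => by obtain ⟨n, rfl⟩ := hy; exact psi_le_one (hD0 (hvD n))⟩
  have hL : Tendsto (fun n => psi P (v n)) atTop (nhds (⨆ n, psi P (v n))) :=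
    tendsto_atTop_ciSup hψmono hψbdd
  set L : ℝ := ⨆ n, psi P (v n) with hLdef
  have hψle : ∀ n, psi P (v n) ≤ L := fun n => le_ciSup hψbdd n
  -- Cauchy in dist0
  have hcauchy : ∀ ε : ℝ, 0 < ε → ∃ N, ∀ m n, N ≤ m → N ≤ n → dist0 P (v m) (v n) < ε := by
    intro ε hε
    set ε' : ℝ := ε/2 with hε'def
    have hε' : 0 < ε' := by linarith
    obtain ⟨M, hM0, hM⟩ := hDb (ENNReal.ofReal (ε'/8)) (by simp [ENNReal.ofReal_pos]; linarith)
    set c : ℝ := (Real.exp (-M/2) * (1 - Real.exp (-ε'/2)))^2 with hcdef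
    have h1 : 0 < 1 - Real.exp (-ε'/2) := by
      have : Real.exp (-ε'/2) < 1 := Real.exp_lt_one_iff.2 (by linarith)
      linarith
    have hc : 0 < c := by positivity
    obtain ⟨N, hN⟩ := (hL.eventually (eventually_gt_nhds
      (show L - c * (ε'/8) < L by nlinarith))).exists_forall_of_atTop
    refine ⟨N, fun m n hm hn => ?_⟩
    -- wlog structure via a helper for ordered pairs
    have key : ∀ a b, N ≤ a → N ≤ b → a ≤ b → dist0 P (v a) (v b) < ε := by
      intro a b ha hb hab
      have hQ : Qv P (v a) (v b) ≤ c * (ε'/8) := by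
        have := Qv_le_psi_diff (hD0 (hvD a)) (hvmono hab)
        have h2 := hN a ha
        have h3 := hψle b
        linarith
      have hP : P {ω | ε' < |(v a) ω - (v b) ω|} ≤ ENNReal.ofReal (3*(ε'/8)) := by
        have hcontrol := Q_control (hD0 (hvD a)) (hD0 (hvD b)) hε' hM0
        have hdiv : ENNReal.ofReal (Qv P (v a) (v b)) / ENNReal.ofReal c
            ≤ ENNReal.ofReal (ε'/8) := by
          rw [ENNReal.div_le_iff_le_mul (Or.inl (by simp [ENNReal.ofReal_pos.2 hc, ne_of_gt]))
            (Or.inl ENNReal.ofReal_ne_top), ← ENNReal.ofReal_mul (by linarith : (0:ℝ) ≤ ε'/8)]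
          exact ENNReal.ofReal_le_ofReal (by nlinarith)
        calc P {ω | ε' < |(v a) ω - (v b) ω|}
            ≤ P {ω | M < (v a) ω} + P {ω | M < (v b) ω}
              + ENNReal.ofReal (Qv P (v a) (v b)) / ENNReal.ofReal c := hcontrol
          _ ≤ ENNReal.ofReal (ε'/8) + ENNReal.ofReal (ε'/8) + ENNReal.ofReal (ε'/8) :=
              add_le_add (add_le_add (hM _ (hvD a)) (hM _ (hvD b))) hdiv
          _ = ENNReal.ofReal (3*(ε'/8)) := by
              rw [← ENNReal.ofReal_add (by linarith) (by linarith),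
                ← ENNReal.ofReal_add (by linarith) (by linarith)]
              ring_nf
      have hd := dist0_le (v a) (v b) hε'.le
      have htr : (P {ω | ε' < |(v a) ω - (v b) ω|}).toReal ≤ 3*(ε'/8) := by
        refine ENNReal.toReal_le_of_le_ofReal (by linarith) hP
      calc dist0 P (v a) (v b) ≤ ε' + (P {ω | ε' < |(v a) ω - (v b) ω|}).toReal := hd
        _ ≤ ε' + 3*(ε'/8) := by linarith
        _ < ε := by rw [hε'def]; linarith
    rcases le_total m n with hmn | hmn
    · exact key m n hm hn hmn
    · rw [dist0_comm]; exact key n m hn hm hmn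
  obtain ⟨h, hth⟩ := complete0 v hcauchy
  have hhD : h ∈ D := hDcl (mem_closure0_of_tendsto hvD hth)
  have hvh : ∀ n, v n ≤ h := by
    intro n
    refine le_of_tendsto0 (w := fun m => v (m + n)) ?_ (fun m => hvmono (Nat.le_add_left n m))
    exact hth.comp (tendsto_add_atTop_nat n)
  refine ⟨h, hhD, hvh 0, ?_⟩
  intro k hk hhk
  have hψk : ∀ n, psi P k ≤ psi P h + (1/2)^n := by
    intro n
    have h1 : psi P k ∈ T (v n) := ⟨k, ⟨hk, le_trans (hvh n) hhk⟩, rfl⟩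
    have h2 : psi P k ≤ S (v n) := le_csSup (hTbdd (v n)) h1
    have h3 := hvpsi n
    have h4 : psi P (v (n+1)) ≤ psi P h := psi_mono (hD0 (hvD (n+1))) (hvh (n+1))
    linarith
  have hψkh : psi P k ≤ psi P h := by
    by_contra hcon
    push_neg at hcon
    obtain ⟨n, hn⟩ := exists_pow_lt_of_lt_one (show (0:ℝ) < psi P k - psi P h by linarith)
      (show (1/2:ℝ) < 1 by norm_num)
    have := hψk n
    linarith
  exact psi_strict (hD0 hhD) hhk hψkh

end S0
end Aux

/-- Proposition: concave monotone maximization.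
If `C ⊆ L⁰₊` is convex, max-closed and bounded, and `𝕌 : L⁰₊ → [-∞, ∞)` is concave, upper
semi-continuous (w.r.t. convergence in probability) and monotone, then there is `g ∈ C^max`
with `sup_{f ∈ C} 𝕌(f) = 𝕌(g) < ∞`. -/
theorem statement0 {Ω : Type*} [MeasurableSpace Ω] (P : Measure Ω) [IsProbabilityMeasure P]
    (C : Set (Ω →ₘ[P] ℝ)) (hCL0 : C ⊆ L0plus P) (hCne : C.Nonempty)
    (hconv : Convex ℝ C) (hmaxcl : MaxClosed P C) (hbdd : Bounded0 P C)
    (U : (Ω →ₘ[P] ℝ) → EReal)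
    -- `U` takes values in `[-∞, ∞)` on `L⁰₊`:
    (hUlttop : ∀ f ∈ L0plus P, U f < ⊤)
    -- `U` is concave on `L⁰₊`:
    (hUconc : ∀ f ∈ L0plus P, ∀ g ∈ L0plus P, ∀ a b : ℝ, 0 ≤ a → 0 ≤ b → a + b = 1 →
      (a : EReal) * U f + (b : EReal) * U g ≤ U (a • f + b • g))
    -- `U` is upper semi-continuous w.r.t. the topology of convergence in probability:
    (hUusc : ∀ f : ℕ → Ω →ₘ[P] ℝ, (∀ n, f n ∈ L0plus P) → ∀ g ∈ L0plus P,
      Tendsto0 P f g → Filter.limsup (fun n => U (f n)) Filter.atTop ≤ U g)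
    -- `U` is monotone: `U f ≤ U g` whenever `f ≤ g` a.s.:
    (hUmono : ∀ f ∈ L0plus P, ∀ g ∈ L0plus P, f ≤ g → U f ≤ U g) :
    ∃ g ∈ maxSet P C, (⨆ f ∈ C, U f) = U g ∧ U g < ⊤ := by
  classical
  have hD0 : closure0 P C ⊆ L0plus P := S0.closure0_subset_L0plus hCL0
  have hDcl : closure0 P (closure0 P C) ⊆ closure0 P C := S0.closure0_idem C
  have hDb : ∀ δ : ENNReal, 0 < δ → ∃ M : ℝ, 0 ≤ M ∧
      ∀ f ∈ closure0 P C, P {ω | M < f ω} ≤ δ := by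
    intro δ hδ
    obtain ⟨M, hM⟩ := S0.bounded_closure0 hbdd δ hδ
    refine ⟨max M 0, le_max_right _ _, fun f hf => ?_⟩
    refine le_trans (measure_mono fun ω hω => ?_) (hM f hf)
    exact lt_of_le_of_lt (le_max_left M 0) hω
  -- maximal element above any element of the closure
  have hmax : ∀ x ∈ closure0 P C, ∃ h ∈ maxSet P C, x ≤ h := by
    intro x hx
    obtain ⟨h, hhD, hxh, hprop⟩ := S0.exists_maximal hD0 hDcl hDb hx
    have hhmaxcl : h ∈ maxSet P (closure0 P C) := ⟨hhD, hprop⟩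
    have hhC : h ∈ C := hmaxcl hhmaxcl
    exact ⟨h, ⟨hhC, fun k hk hlek => hprop k (S0.subset_closure0 C hk) hlek⟩, hxh⟩
  set s : EReal := ⨆ f ∈ C, U f with hs_def
  have hUle_s : ∀ f ∈ C, U f ≤ s := fun f hf => le_biSup U hf
  by_cases hsbot : s = ⊥
  · -- degenerate case
    obtain ⟨f0, hf0⟩ := hCne
    obtain ⟨h, hhmax, _⟩ := hmax f0 (S0.subset_closure0 C hf0)
    refine ⟨h, hhmax, ?_, ?_⟩
    · have := hUle_s h hhmax.1
      rw [hsbot] at this ⊢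
      exact (le_bot_iff.1 this).symm
    · have := hUle_s h hhmax.1
      rw [hsbot] at this
      rw [le_bot_iff.1 this]
      exact bot_lt_top
  · -- main case
    have hsbot' : ⊥ < s := bot_lt_iff_ne_bot.2 hsbot
    -- a monotone real sequence approaching `s` strictly from below
    obtain ⟨r, hrmono, hr1, hr2⟩ : ∃ r : ℕ → ℝ, Monotone r ∧ (∀ n, (r n : EReal) < s) ∧
        ∀ t : EReal, t < s → ∃ n, t < (r n : EReal) := by
      rcases eq_top_or_lt_top s with hstop | hslt
      · refine ⟨fun n => (n : ℝ), fun a b hab => by exact Nat.cast_le.mpr hab, ?_, ?_⟩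
        · intro n; rw [hstop]; exact EReal.coe_lt_top _
        · intro t ht
          induction t using EReal.rec with
          | bot => exact ⟨0, bot_lt_iff_ne_bot.2 (EReal.coe_ne_bot _)⟩
          | coe a =>
              obtain ⟨n, hn⟩ := exists_nat_gt a
              exact ⟨n, by exact_mod_cast hn⟩
          | top => rw [hstop] at ht; exact absurd ht (lt_irrefl _)
      · set σ : ℝ := s.toReal with hσdef
        have hσ : (σ : EReal) = s := EReal.coe_toReal hslt.ne hsbot
        refine ⟨fun n => σ - 1/(n+1), ?_, ?_, ?_⟩
        · intro a b hab
          have h1 : (0:ℝ) < (a:ℝ) + 1 := by positivity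
          have : (1:ℝ)/(b+1) ≤ 1/(a+1) := by
            apply one_div_le_one_div_of_le h1
            have : (a:ℝ) ≤ b := by exact_mod_cast hab
            linarith
          show σ - 1/(a+1) ≤ σ - 1/(b+1)
          linarith
        · intro n
          rw [← hσ]
          have : σ - 1/(n+1) < σ := by
            have : (0:ℝ) < 1/(n+1) := by positivity
            linarith
          exact_mod_cast this
        · intro t ht
          rw [← hσ] at ht
          induction t using EReal.rec with
          | bot => exact ⟨0, bot_lt_iff_ne_bot.2 (EReal.coe_ne_bot _)⟩
          | coe a =>
              have ha : a < σ := by exact_mod_cast ht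
              obtain ⟨n, hn⟩ := exists_nat_one_div_lt (show (0:ℝ) < σ - a by linarith)
              exact ⟨n, by
                show (a : EReal) < ((σ - 1/(n+1) : ℝ) : EReal)
                exact_mod_cast (by linarith : a < σ - 1/(n+1))⟩
          | top => exact absurd ht (not_lt.2 le_top)
    -- maximizing sequence
    have hseq : ∀ n : ℕ, ∃ f, f ∈ C ∧ (r n : EReal) < U f := by
      intro n
      have := hr1 n
      rw [hs_def] at this
      simp only [lt_iSup_iff] at this
      obtain ⟨f, hf, hUf⟩ := this
      exact ⟨f, hf, hUf⟩
    choose fseq hfC hfU using hseq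
    -- convexity of superlevel sets
    have hereal_combo : ∀ {x y : EReal} {a b t : ℝ}, 0 ≤ a → 0 ≤ b → a + b = 1 →
        (t:EReal) ≤ x → (t:EReal) ≤ y → x < ⊤ → y < ⊤ →
        (t : EReal) ≤ (a:EReal) * x + (b:EReal) * y := by
      intro x y a b t ha hb hab hx hy hxt hyt
      have hxb : x ≠ ⊥ := fun hc => by rw [hc] at hx; exact absurd (le_bot_iff.1 hx) (by simp)
      have hyb : y ≠ ⊥ := fun hc => by rw [hc] at hy; exact absurd (le_bot_iff.1 hy) (by simp)
      set rx : ℝ := x.toReal with hrx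
      set ry : ℝ := y.toReal with hry
      have hxe : (rx : EReal) = x := EReal.coe_toReal hxt.ne hxb
      have hye : (ry : EReal) = y := EReal.coe_toReal hyt.ne hyb
      rw [← hxe, ← hye]
      rw [← EReal.coe_mul, ← EReal.coe_mul, ← EReal.coe_add]
      have h1 : t ≤ rx := by rw [← hxe] at hx; exact_mod_cast hx
      have h2 : t ≤ ry := by rw [← hye] at hy; exact_mod_cast hy
      have : t ≤ a * rx + b * ry := by
        calc t = (a+b)*t := by rw [hab]; ring
          _ = a*t + b*t := by ring
          _ ≤ a*rx + b*ry :=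
              add_le_add (mul_le_mul_of_nonneg_left h1 ha) (mul_le_mul_of_nonneg_left h2 hb)
      exact_mod_cast this
    have hlevel : ∀ t : ℝ, Convex ℝ {h | h ∈ C ∧ (t : EReal) ≤ U h} := by
      intro t
      intro f hf g hg a b ha hb hab
      refine ⟨hconv hf.1 hg.1 ha hb hab, ?_⟩
      have h1 := hUconc f (hCL0 hf.1) g (hCL0 hg.1) a b ha hb hab
      refine le_trans (hereal_combo ha hb hab hf.2 hg.2
        (hUlttop f (hCL0 hf.1)) (hUlttop g (hCL0 hg.1))) h1
    -- the decreasing hulls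
    set Cn : ℕ → Set (Ω →ₘ[P] ℝ) := fun n => convexHull ℝ (fseq '' Set.Ici n) with hCn_def
    have hCnC : ∀ n, Cn n ⊆ C := by
      intro n
      refine convexHull_min ?_ hconv
      rintro x ⟨k, hk, rfl⟩
      exact hfC k
    have hCn_ne : ∀ n, (Cn n).Nonempty :=
      fun n => ⟨fseq n, subset_convexHull ℝ _ ⟨n, Set.self_mem_Ici, rfl⟩⟩
    have hCn_anti : ∀ n, Cn (n+1) ⊆ Cn n :=
      fun n => convexHull_mono (Set.image_mono (Set.Ici_subset_Ici.2 (Nat.le_succ n)))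
    have hCn_level : ∀ n, Cn n ⊆ {h | h ∈ C ∧ ((r n : ℝ) : EReal) ≤ U h} := by
      intro n
      refine convexHull_min ?_ (hlevel (r n))
      rintro x ⟨k, hk, rfl⟩
      refine ⟨hfC k, ?_⟩
      have h1 : (r n : EReal) ≤ (r k : EReal) := by exact_mod_cast hrmono hk
      exact le_trans h1 (hfU k).le
    -- Komlós-type selection
    set Tn : ℕ → Set ℝ := fun n => S0.psi P '' Cn n with hTn_def
    have hTn_ne : ∀ n, (Tn n).Nonempty := fun n => (hCn_ne n).image _
    have hTn_bdd : ∀ n, BddAbove (Tn n) := fun n => ⟨1, fun y hy => by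
      obtain ⟨k, hk, rfl⟩ := hy; exact S0.psi_le_one (hCL0 (hCnC n hk))⟩
    set σ' : ℕ → ℝ := fun n => sSup (Tn n) with hσ'_def
    have hσ'anti : Antitone σ' := by
      refine antitone_nat_of_succ_le fun n => ?_
      exact csSup_le_csSup (hTn_bdd n) (hTn_ne (n+1)) (Set.image_mono (hCn_anti n))
    have hσ'bdd : BddBelow (Set.range σ') := by
      refine ⟨0, fun y hy => ?_⟩
      obtain ⟨n, rfl⟩ := hy
      obtain ⟨x, hx⟩ := hCn_ne n
      exact le_csSup_of_le (hTn_bdd n) ⟨x, hx, rfl⟩ (S0.psi_nonneg (hCL0 (hCnC n hx)))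
    have hΛ : Tendsto σ' atTop (nhds (⨅ n, σ' n)) := tendsto_atTop_ciInf hσ'anti hσ'bdd
    set Λ : ℝ := ⨅ n, σ' n with hΛdef
    have hσ'ge : ∀ n, Λ ≤ σ' n := fun n => ciInf_le hσ'bdd n
    have hσ'mono' : ∀ a b : ℕ, a ≤ b → σ' b ≤ σ' a := fun a b hab => hσ'anti hab
    have hgsel : ∀ n : ℕ, ∃ gn, gn ∈ Cn n ∧ σ' n - (1/2)^n < S0.psi P gn := by
      intro n
      have hlt : σ' n - (1/2)^n < σ' n := by
        have : (0:ℝ) < (1/2)^n := by positivity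
        linarith
      obtain ⟨y, hy, hy2⟩ := exists_lt_of_lt_csSup (hTn_ne n) hlt
      obtain ⟨k, hk, rfl⟩ := hy
      exact ⟨k, hk, hy2⟩
    choose gseq hgCn hgpsi using hgsel
    have hgC : ∀ n, gseq n ∈ C := fun n => hCnC n (hgCn n)
    have hgL0 : ∀ n, gseq n ∈ L0plus P := fun n => hCL0 (hgC n)
    have hCn_anti' : ∀ a b : ℕ, a ≤ b → Cn b ⊆ Cn a := by
      intro a b hab
      induction hab with
      | refl => exact fun x hx => hx
      | step h ih => exact fun x hx => ih (hCn_anti _ hx)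
    -- Cauchy
    have hcauchy : ∀ ε : ℝ, 0 < ε → ∃ N, ∀ m n, N ≤ m → N ≤ n →
        dist0 P (gseq m) (gseq n) < ε := by
      intro ε hε
      set ε' : ℝ := ε/2 with hε'def
      have hε' : 0 < ε' := by linarith
      obtain ⟨M, hM0, hM⟩ := hDb (ENNReal.ofReal (ε'/8))
        (by simp [ENNReal.ofReal_pos]; linarith)
      set c : ℝ := (Real.exp (-M/2) * (1 - Real.exp (-ε'/2)))^2 with hcdef
      have h1 : 0 < 1 - Real.exp (-ε'/2) := by
        have : Real.exp (-ε'/2) < 1 := Real.exp_lt_one_iff.2 (by linarith)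
        linarith
      have hc : 0 < c := by positivity
      -- choose N
      obtain ⟨N1, hN1⟩ := (hΛ.eventually (eventually_lt_nhds
        (show Λ < Λ + c * (ε'/24) by nlinarith))).exists_forall_of_atTop
      obtain ⟨N2, hN2⟩ := exists_pow_lt_of_lt_one
        (show (0:ℝ) < c * (ε'/24) by positivity) (show (1/2:ℝ) < 1 by norm_num)
      set N := max N1 N2 with hN_def
      refine ⟨N, fun m n hm hn => ?_⟩
      have key : ∀ a b, N ≤ a → N ≤ b → a ≤ b → dist0 P (gseq a) (gseq b) < ε := by
        intro a b ha hb hab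
        have hpow : ∀ k, N ≤ k → (1/2:ℝ)^k < c * (ε'/24) := by
          intro k hk
          refine lt_of_le_of_lt ?_ hN2
          exact pow_le_pow_of_le_one (by norm_num) (by norm_num)
            (le_trans (le_max_right N1 N2) hk)
        have hQ : S0.Qv P (gseq a) (gseq b) ≤ c * (ε'/8) := by
          have hmid : (1/2:ℝ) • (gseq a) + (1/2:ℝ) • (gseq b) ∈ Cn a := by
            have hconvCn : Convex ℝ (Cn a) := convex_convexHull ℝ _
            have hgb : gseq b ∈ Cn a := hCn_anti' a b hab (hgCn b)
            have := hconvCn (hgCn a) hgb (by norm_num : (0:ℝ) ≤ 1/2)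
              (by norm_num : (0:ℝ) ≤ 1/2) (by norm_num)
            exact this
          have hpsimid : S0.psi P ((1/2:ℝ) • (gseq a) + (1/2:ℝ) • (gseq b)) ≤ σ' a :=
            le_csSup (hTn_bdd a) ⟨_, hmid, rfl⟩
          have heq := S0.psi_midpoint (hgL0 a) (hgL0 b)
          have hψa := hgpsi a
          have hψb := hgpsi b
          have hσa : σ' a ≤ Λ + c * (ε'/24) := (hN1 a (le_trans (le_max_left N1 N2) ha)).le
          have hσb : Λ ≤ σ' b := hσ'ge b
          have hσab : σ' b ≤ σ' a := hσ'mono' a b hab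
          have hpa := hpow a ha
          have hpb := hpow b hb
          -- Qv/2 = ψ(mid) - (ψa+ψb)/2 ≤ σ'a - (σ'a - 2^-a + σ'b - 2^-b)/2
          nlinarith
        have hP : P {ω | ε' < |(gseq a) ω - (gseq b) ω|} ≤ ENNReal.ofReal (3*(ε'/8)) := by
          have hcontrol := S0.Q_control (hgL0 a) (hgL0 b) hε' hM0
          have hdiv : ENNReal.ofReal (S0.Qv P (gseq a) (gseq b)) / ENNReal.ofReal c
              ≤ ENNReal.ofReal (ε'/8) := by
            rw [ENNReal.div_le_iff_le_mul (Or.inl (by simp [ENNReal.ofReal_pos.2 hc, ne_of_gt]))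
              (Or.inl ENNReal.ofReal_ne_top), ← ENNReal.ofReal_mul (by linarith : (0:ℝ) ≤ ε'/8)]
            exact ENNReal.ofReal_le_ofReal (by nlinarith)
          calc P {ω | ε' < |(gseq a) ω - (gseq b) ω|}
              ≤ P {ω | M < (gseq a) ω} + P {ω | M < (gseq b) ω}
                + ENNReal.ofReal (S0.Qv P (gseq a) (gseq b)) / ENNReal.ofReal c := hcontrol
            _ ≤ ENNReal.ofReal (ε'/8) + ENNReal.ofReal (ε'/8) + ENNReal.ofReal (ε'/8) :=
                add_le_add (add_le_add
                  (hM _ (S0.subset_closure0 C (hgC a)))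
                  (hM _ (S0.subset_closure0 C (hgC b)))) hdiv
            _ = ENNReal.ofReal (3*(ε'/8)) := by
                rw [← ENNReal.ofReal_add (by linarith) (by linarith),
                  ← ENNReal.ofReal_add (by linarith) (by linarith)]
                ring_nf
        have hd := S0.dist0_le (gseq a) (gseq b) hε'.le
        have htr : (P {ω | ε' < |(gseq a) ω - (gseq b) ω|}).toReal ≤ 3*(ε'/8) :=
          ENNReal.toReal_le_of_le_ofReal (by linarith) hP
        calc dist0 P (gseq a) (gseq b)
            ≤ ε' + (P {ω | ε' < |(gseq a) ω - (gseq b) ω|}).toReal := hd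
          _ ≤ ε' + 3*(ε'/8) := by linarith
          _ < ε := by rw [hε'def]; linarith
      rcases le_total m n with hmn | hmn
      · exact key m n hm hn hmn
      · rw [S0.dist0_comm]; exact key n m hn hm hmn
    obtain ⟨ginf, htg⟩ := S0.complete0 gseq hcauchy
    have hginf_cl : ginf ∈ closure0 P C := S0.mem_closure0_of_tendsto hgC htg
    have hginf_L0 : ginf ∈ L0plus P := hD0 hginf_cl
    -- value lower bound
    have husc := hUusc gseq hgL0 ginf hginf_L0 htg
    have hlower : ∀ n, (r n : EReal) ≤ Filter.limsup (fun k => U (gseq k)) Filter.atTop := by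
      intro n
      refine Filter.le_limsup_of_frequently_le ?_
      refine (eventually_atTop.2 ⟨n, fun k hk => ?_⟩).frequently
      exact le_trans (by exact_mod_cast hrmono hk : (r n : EReal) ≤ (r k : EReal))
        ((hCn_level k (hgCn k)).2)
    have hUginf : s ≤ U ginf := by
      by_contra hcon
      push_neg at hcon
      obtain ⟨n, hn⟩ := hr2 (U ginf) hcon
      exact absurd (lt_of_lt_of_le hn (le_trans (hlower n) husc)) (lt_irrefl _)
    -- finish
    obtain ⟨h, hhmax, hgh⟩ := hmax ginf hginf_cl
    have hUh : s ≤ U h := le_trans hUginf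
      (hUmono ginf hginf_L0 h (hCL0 hhmax.1) hgh)
    refine ⟨h, hhmax, le_antisymm (hUle_s h hhmax.1) hUh ▸ rfl, hUlttop h (hCL0 hhmax.1)⟩
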